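/- Let A₀, A₁ and B be n×n complex matrices. The following are equivalent: (i) there exist d₀, d₁ ∈ ℂ with |d₀|² + |d₁|² = 1 such that A₀ = d₀ • B and A₁ = d₁ • B; (ii) for every positive semidefinite n×n complex matrix ρ, A₀·ρ·A₀ᴴ + A₁·ρ·A₁ᴴ = B·ρ·Bᴴ. -/

import Mathlib

open Matrix ComplexOrder

private lemma sandwich_entry {n : ℕ} (M : Matrix (Fin n) (Fin n) ℂ) (u : Fin n → ℂ)
    (i k : Fin n) :
    (M * vecMulVec u (star u) * Mᴴ) i k
      = (M *ᵥ u) i * (starRingEnd ℂ) ((M *ᵥ u) k) := by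
  simp only [mul_apply, vecMulVec_apply, conjTranspose_apply, mulVec, dotProduct,
    Pi.star_apply, map_sum, _root_.map_mul, Finset.sum_mul, Finset.mul_sum]
  refine Finset.sum_congr rfl fun p _ => Finset.sum_congr rfl fun q _ => ?_
  simp [RCLike.star_def]
  ring

private lemma vecMulVec_posSemidef {n : ℕ} (u : Fin n → ℂ) :
    (vecMulVec u (star u)).PosSemidef := by
  rw [vecMulVec_eq (Fin 1), ← conjTranspose_replicateCol]
  exact posSemidef_self_mul_conjTranspose _

private lemma polar {P Q R S : ℂ} (h1 : P + Q + R + S = 0) (h2 : P - Q - R + S = 0)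
    (h3 : P - Complex.I * Q + Complex.I * R + S = 0) : Q = 0 := by
  have hRQ : R = Q := by
    have h : Complex.I * (R - Q) = 0 := by linear_combination h3 - (h1 + h2)/2
    rcases mul_eq_zero.1 h with h | h
    · exact absurd h Complex.I_ne_zero
    · linear_combination h
  have h : Q + R = 0 := by linear_combination (h1 - h2)/2
  rw [hRQ] at h
  linear_combination h / 2

theorem two_kraus_eq_single_iff {n : ℕ} (A₀ A₁ B : Matrix (Fin n) (Fin n) ℂ) :
    (∃ d₀ d₁ : ℂ, ‖d₀‖ ^ 2 + ‖d₁‖ ^ 2 = 1 ∧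
        A₀ = d₀ • B ∧ A₁ = d₁ • B) ↔
      (∀ ρ : Matrix (Fin n) (Fin n) ℂ, ρ.PosSemidef →
        A₀ * ρ * A₀ᴴ + A₁ * ρ * A₁ᴴ = B * ρ * Bᴴ) := by
  constructor
  · rintro ⟨d₀, d₁, habs, rfl, rfl⟩ ρ _
    have hd : d₀ * (starRingEnd ℂ) d₀ + d₁ * (starRingEnd ℂ) d₁ = 1 := by
      rw [Complex.mul_conj, Complex.mul_conj]
      norm_cast
      rw [← Complex.sq_norm, ← Complex.sq_norm]
      exact habs
    have e : ∀ d : ℂ, (d • B) * ρ * (d • B)ᴴ = (d * (starRingEnd ℂ) d) • (B * ρ * Bᴴ) := by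
      intro d
      simp [Matrix.smul_mul, Matrix.mul_smul, smul_smul, Complex.star_def, mul_comm]
    rw [e, e, ← add_smul, hd, one_smul]
  · intro h
    have key : ∀ i j k l, A₀ i j * (starRingEnd ℂ) (A₀ k l) + A₁ i j * (starRingEnd ℂ) (A₁ k l)
        = B i j * (starRingEnd ℂ) (B k l) := by
      intro i j k l
      have H : ∀ c : ℂ,
          (A₀ i j + c * A₀ i l) * (starRingEnd ℂ) (A₀ k j + c * A₀ k l)
          + (A₁ i j + c * A₁ i l) * (starRingEnd ℂ) (A₁ k j + c * A₁ k l)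
          = (B i j + c * B i l) * (starRingEnd ℂ) (B k j + c * B k l) := by
        intro c
        set u : Fin n → ℂ := (Pi.single j 1 : Fin n → ℂ) + c • (Pi.single l 1 : Fin n → ℂ) with hu
        have hmv : ∀ (M : Matrix (Fin n) (Fin n) ℂ) (i : Fin n),
            (M *ᵥ u) i = M i j + c * M i l := by
          intro M i
          simp [hu, mulVec_add, mulVec_smul, mulVec_single]
        have hh := congrFun (congrFun (h _ (vecMulVec_posSemidef u)) i) k
        rw [Matrix.add_apply, sandwich_entry, sandwich_entry, sandwich_entry,
          hmv, hmv, hmv, hmv, hmv, hmv] at hh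
        exact hh
      have h1 := H 1
      have h2 := H (-1)
      have h3 := H Complex.I
      simp only [map_add, _root_.map_mul, _root_.map_one, map_neg, Complex.conj_I, one_mul,
        neg_one_mul, neg_mul] at h1 h2 h3
      rw [← sub_eq_zero]
      refine polar
        (P := A₀ i j * (starRingEnd ℂ) (A₀ k j) + A₁ i j * (starRingEnd ℂ) (A₁ k j)
          - B i j * (starRingEnd ℂ) (B k j))
        (R := A₀ i l * (starRingEnd ℂ) (A₀ k j) + A₁ i l * (starRingEnd ℂ) (A₁ k j)
          - B i l * (starRingEnd ℂ) (B k j))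
        (S := A₀ i l * (starRingEnd ℂ) (A₀ k l) + A₁ i l * (starRingEnd ℂ) (A₁ k l)
          - B i l * (starRingEnd ℂ) (B k l))
        (by linear_combination h1) (by linear_combination h2)
        (by linear_combination h3 + ((starRingEnd ℂ) (A₀ k l) * A₀ i l
          + (starRingEnd ℂ) (A₁ k l) * A₁ i l - (starRingEnd ℂ) (B k l) * B i l) * Complex.I_sq)
    by_cases hB : B = 0
    · refine ⟨1, 0, by simp, ?_, ?_⟩ <;>
      · subst hB
        ext i j
        have h0 := key i j i j
        simp only [Matrix.zero_apply, map_zero, mul_zero] at h0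
        rw [Complex.mul_conj, Complex.mul_conj, ← Complex.ofReal_add] at h0
        norm_cast at h0
        have ha : Complex.normSq (A₀ i j) = 0 := by
          nlinarith [Complex.normSq_nonneg (A₀ i j), Complex.normSq_nonneg (A₁ i j)]
        have hb : Complex.normSq (A₁ i j) = 0 := by
          nlinarith [Complex.normSq_nonneg (A₀ i j), Complex.normSq_nonneg (A₁ i j)]
        simp [Complex.normSq_eq_zero.1 ha, Complex.normSq_eq_zero.1 hb]
    · have hex : ∃ k l, B k l ≠ 0 := by
        by_contra hc
        push_neg at hc
        exact hB (by ext k l; exact hc k l)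
      obtain ⟨k, l, hkl⟩ := hex
      have hcw : (starRingEnd ℂ) (B k l) ≠ 0 := by
        intro hco
        exact hkl (by simpa using congrArg (starRingEnd ℂ) hco)
      have h3 := key k l k l
      have habs : ‖A₀ k l / B k l‖ ^ 2 + ‖A₁ k l / B k l‖ ^ 2 = 1 := by
        have h3' : Complex.normSq (A₀ k l) + Complex.normSq (A₁ k l)
            = Complex.normSq (B k l) := by
          rw [Complex.mul_conj, Complex.mul_conj, Complex.mul_conj] at h3
          exact_mod_cast h3
        have hw : Complex.normSq (B k l) ≠ 0 := fun hh => hkl (Complex.normSq_eq_zero.1 hh)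
        simp only [Complex.norm_div, div_pow, Complex.sq_norm]
        rw [← add_div, h3', div_self hw]
      have main : ∀ i j, A₀ i j * B k l = A₀ k l * B i j ∧ A₁ i j * B k l = A₁ k l * B i j := by
        intro i j
        have h1 := key i j k l
        have h2 := key i j i j
        have h4 := key k l i j
        have hz : (A₀ i j * A₁ k l - A₁ i j * A₀ k l)
            * (starRingEnd ℂ) (A₀ i j * A₁ k l - A₁ i j * A₀ k l) = 0 := by
          rw [map_sub, _root_.map_mul, _root_.map_mul]
          linear_combination (A₀ k l * (starRingEnd ℂ) (A₀ k l)
              + A₁ k l * (starRingEnd ℂ) (A₁ k l)) * h2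
            + (B i j * (starRingEnd ℂ) (B i j)) * h3
            - (A₀ k l * (starRingEnd ℂ) (A₀ i j) + A₁ k l * (starRingEnd ℂ) (A₁ i j)) * h1
            - (B i j * (starRingEnd ℂ) (B k l)) * h4
        rw [Complex.mul_conj] at hz
        have hprop : A₀ i j * A₁ k l = A₁ i j * A₀ k l :=
          sub_eq_zero.1 (Complex.normSq_eq_zero.1 (by exact_mod_cast hz))
        constructor
        · refine mul_right_cancel₀ hcw ?_
          linear_combination A₀ k l * h1 + (starRingEnd ℂ) (A₁ k l) * hprop - A₀ i j * h3
        · refine mul_right_cancel₀ hcw ?_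
          linear_combination A₁ k l * h1 - (starRingEnd ℂ) (A₀ k l) * hprop - A₁ i j * h3
      refine ⟨A₀ k l / B k l, A₁ k l / B k l, habs, ?_, ?_⟩
      · ext i j
        have := (main i j).1
        rw [Matrix.smul_apply, smul_eq_mul]
        field_simp
        linear_combination this
      · ext i j
        have := (main i j).2
        rw [Matrix.smul_apply, smul_eq_mul]
        field_simp
        linear_combination this
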